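/- arXiv:0706.2153 — 2 statements merged into one kernel-verified Lean document; each statement's English description precedes it below -/
import Mathlib

section
/- Let K be a compact subset of ℝⁿ. The function v_K : ℝⁿ → ℝ defined by v_K(x) = ‖x‖² − d_K(x)² is convex, and at Lebesgue-almost every x ∈ ℝⁿ it is differentiable with gradient ∇v_K(x) = 2 p_K(x), where p_K(x) is the unique nearest point of K to x. -/
open MeasureTheory Metric Set
open scoped ENNReal NNReal

local notation "E" n => EuclideanSpace ℝ (Fin n)

private lemma lower_bound {n : ℕ} {K : Set (EuclideanSpace ℝ (Fin n))} {p : EuclideanSpace ℝ (Fin n)}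
    (hp : p ∈ K) (y : EuclideanSpace ℝ (Fin n)) :
    2 * inner ℝ p y - ‖p‖ ^ 2 ≤ ‖y‖ ^ 2 - Metric.infDist y K ^ 2 := by
  have h1 : Metric.infDist y K ≤ dist y p := Metric.infDist_le_dist_of_mem hp
  have h0 : 0 ≤ Metric.infDist y K := Metric.infDist_nonneg
  have h2 : dist y p ^ 2 = ‖y‖ ^ 2 - 2 * inner ℝ y p + ‖p‖ ^ 2 := by
    rw [dist_eq_norm]; exact norm_sub_sq_real y p
  have h3 : (inner ℝ y p : ℝ) = inner ℝ p y := real_inner_comm p y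
  nlinarith [sq_nonneg (dist y p - Metric.infDist y K)]

private lemma eq_at {n : ℕ} {K : Set (EuclideanSpace ℝ (Fin n))} {p x : EuclideanSpace ℝ (Fin n)}
    (hd : dist x p = Metric.infDist x K) :
    ‖x‖ ^ 2 - Metric.infDist x K ^ 2 = 2 * inner ℝ p x - ‖p‖ ^ 2 := by
  have h2 : dist x p ^ 2 = ‖x‖ ^ 2 - 2 * inner ℝ x p + ‖p‖ ^ 2 := by
    rw [dist_eq_norm]; exact norm_sub_sq_real x p
  have h3 : (inner ℝ x p : ℝ) = inner ℝ p x := real_inner_comm p x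
  rw [← hd]; linarith

theorem stmt5 (n : ℕ) (K : Set (EuclideanSpace ℝ (Fin n))) (hK : IsCompact K)
    (hne : K.Nonempty) :
    ConvexOn ℝ Set.univ
      (fun x : EuclideanSpace ℝ (Fin n) => ‖x‖ ^ 2 - Metric.infDist x K ^ 2) ∧
    ∀ᵐ x : EuclideanSpace ℝ (Fin n) ∂volume,
      ∃ p, p ∈ K ∧ dist x p = Metric.infDist x K ∧
        (∀ q ∈ K, dist x q = Metric.infDist x K → q = p) ∧
        HasGradientAt
          (fun y : EuclideanSpace ℝ (Fin n) => ‖y‖ ^ 2 - Metric.infDist y K ^ 2)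
          ((2 : ℝ) • p) x := by
  constructor
  · refine ⟨convex_univ, fun a _ b _ la lb hla hlb hab => ?_⟩
    obtain ⟨p, hpK, hpd⟩ := hK.exists_infDist_eq_dist hne (la • a + lb • b)
    have heq := eq_at (K := K) (p := p) (x := la • a + lb • b) hpd.symm
    have ha := lower_bound hpK a
    have hb := lower_bound hpK b
    have hinner : (inner ℝ p (la • a + lb • b) : ℝ) = la * inner ℝ p a + lb * inner ℝ p b := by
      rw [inner_add_right, real_inner_smul_right, real_inner_smul_right]
    show ‖la • a + lb • b‖ ^ 2 - Metric.infDist (la • a + lb • b) K ^ 2 ≤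
      la * (‖a‖ ^ 2 - Metric.infDist a K ^ 2) + lb * (‖b‖ ^ 2 - Metric.infDist b K ^ 2)
    rw [heq, hinner]
    nlinarith
  · -- a.e. part
    have hlip : LipschitzWith 1 (fun x : EuclideanSpace ℝ (Fin n) => Metric.infDist x K) :=
      lipschitz_infDist_pt K
    filter_upwards [hlip.ae_differentiableAt] with x hdx
    obtain ⟨p, hpK, hpd⟩ := hK.exists_infDist_eq_dist hne x
    -- differentiability of v at x
    have hnormsq : DifferentiableAt ℝ (fun y : EuclideanSpace ℝ (Fin n) => ‖y‖ ^ 2) x := by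
      have : (fun y : EuclideanSpace ℝ (Fin n) => ‖y‖ ^ 2)
          = fun y : EuclideanSpace ℝ (Fin n) => (inner ℝ y y : ℝ) := by
        funext y; rw [real_inner_self_eq_norm_sq]
      rw [this]
      exact (differentiable_id.inner ℝ differentiable_id).differentiableAt
    have hdsq : DifferentiableAt ℝ
        (fun y : EuclideanSpace ℝ (Fin n) => Metric.infDist y K ^ 2) x := by
      simp only [pow_two]
      exact hdx.mul hdx
    have hv : DifferentiableAt ℝ
        (fun y : EuclideanSpace ℝ (Fin n) => ‖y‖ ^ 2 - Metric.infDist y K ^ 2) x :=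
      hnormsq.sub hdsq
    -- key: for any nearest point q, v has fderiv toDual (2•q) at x
    have key : ∀ q ∈ K, dist x q = Metric.infDist x K →
        HasFDerivAt (fun y : EuclideanSpace ℝ (Fin n) => ‖y‖ ^ 2 - Metric.infDist y K ^ 2)
          (InnerProductSpace.toDual ℝ (EuclideanSpace ℝ (Fin n)) ((2 : ℝ) • q)) x := by
      intro q hqK hqd
      set A : (EuclideanSpace ℝ (Fin n)) →L[ℝ] ℝ :=
        InnerProductSpace.toDual ℝ (EuclideanSpace ℝ (Fin n)) ((2 : ℝ) • q) with hA
      have hAapp : ∀ y, A y = 2 * inner ℝ q y := by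
        intro y
        simp [hA, InnerProductSpace.toDual_apply_apply, real_inner_smul_left]
      have haff : DifferentiableAt ℝ
          (fun y : EuclideanSpace ℝ (Fin n) => 2 * (inner ℝ q y : ℝ) - ‖q‖ ^ 2) x := by
        exact ((differentiable_const q).inner ℝ differentiable_id).differentiableAt.const_mul 2
          |>.sub_const _
      set g : EuclideanSpace ℝ (Fin n) → ℝ :=
        fun y => (‖y‖ ^ 2 - Metric.infDist y K ^ 2) - (2 * inner ℝ q y - ‖q‖ ^ 2) with hg
      have hgdiff : DifferentiableAt ℝ g x := hv.sub haff
      have hgmin : IsLocalMin g x := by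
        apply Filter.Eventually.of_forall
        intro y
        have h1 : g x = 0 := by
          simp only [hg]
          have := eq_at (K := K) (p := q) (x := x) hqd
          linarith
        have h2 : 0 ≤ g y := by
          simp only [hg]
          have := lower_bound hqK y
          linarith
        linarith
      have hgf : fderiv ℝ g x = 0 := hgmin.fderiv_eq_zero
      have hgfd : HasFDerivAt g 0 x := hgf ▸ hgdiff.hasFDerivAt
      have haffd : HasFDerivAt
          (fun y : EuclideanSpace ℝ (Fin n) => 2 * (inner ℝ q y : ℝ) - ‖q‖ ^ 2) A x := by
        have h1 : HasFDerivAt (fun y : EuclideanSpace ℝ (Fin n) => (inner ℝ q y : ℝ))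
            (innerSL ℝ q) x := (innerSL ℝ q).hasFDerivAt
        have h2 := (h1.const_mul (2 : ℝ)).sub_const (‖q‖ ^ 2)
        refine h2.congr_fderiv ?_
        ext y
        simp [hAapp, innerSL_apply_apply]
      have : HasFDerivAt (fun y : EuclideanSpace ℝ (Fin n) => ‖y‖ ^ 2 - Metric.infDist y K ^ 2)
          (0 + A) x := by
        have hsum := hgfd.add haffd
        exact hsum.congr_of_eventuallyEq (Filter.Eventually.of_forall fun y => by
          simp only [hg, Pi.add_apply]; ring)
      simpa using this
    have hpfd := key p hpK hpd.symm
    refine ⟨p, hpK, hpd.symm, ?_, ?_⟩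
    · intro q hqK hqd
      have hqfd := key q hqK hqd
      have := hpfd.unique hqfd
      have h2 : (2 : ℝ) • p = (2 : ℝ) • q :=
        (InnerProductSpace.toDual ℝ (EuclideanSpace ℝ (Fin n))).injective this
      have : q = p := by
        have := smul_right_injective (EuclideanSpace ℝ (Fin n)) (two_ne_zero (α := ℝ)) h2
        exact this.symm
      exact this
    · rw [hasGradientAt_iff_hasFDerivAt]
      exact hpfd
end

section
/- Let I ⊆ ℝ be an interval and f : I → ℝ a nondecreasing function with diam f(I) ≤ k. Let F ⊆ I × ℝ be the completed graph of f, i.e. the set of points (x, y) with lim_{t→x⁻} f(t) ≤ y ≤ lim_{t→x⁺} f(t). Then for every r > 0, the area of the r-neighborhood of F in ℝ² satisfies H²(F^r) ≤ 3π (ℓ(I) + k + r) · r, where ℓ(I) is the length of I. -/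
open MeasureTheory Metric Set
open scoped ENNReal NNReal Classical

/-- The left limit of a monotone function `f` on the interval `I` at `x`:
the supremum of the values of `f` at points of `I` to the left of `x`
(equal to `f x` when there are no such points, e.g. at the left endpoint). -/
noncomputable def leftVal (I : Set ℝ) (f : ℝ → ℝ) (x : ℝ) : ℝ :=
  if (I ∩ Set.Iio x).Nonempty then sSup (f '' (I ∩ Set.Iio x)) else f x

/-- The right limit of a monotone function `f` on the interval `I` at `x`. -/
noncomputable def rightVal (I : Set ℝ) (f : ℝ → ℝ) (x : ℝ) : ℝ :=
  if (I ∩ Set.Ioi x).Nonempty then sInf (f '' (I ∩ Set.Ioi x)) else f x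

/-- The completed graph of `f` on `I`, as a subset of the Euclidean plane:
the points `(x, y)` with `x ∈ I` and `lim_{t → x⁻} f(t) ≤ y ≤ lim_{t → x⁺} f(t)`. -/
def completedGraph (I : Set ℝ) (f : ℝ → ℝ) : Set (EuclideanSpace ℝ (Fin 2)) :=
  {p | p 0 ∈ I ∧ leftVal I f (p 0) ≤ p 1 ∧ p 1 ≤ rightVal I f (p 0)}

lemma coord_abs_le_dist (p q : EuclideanSpace ℝ (Fin 2)) (i : Fin 2) :
    |p i - q i| ≤ dist p q := by
  rw [EuclideanSpace.dist_eq]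
  refine Real.abs_le_sqrt ?_
  have h := Finset.single_le_sum (f := fun j => dist (p j) (q j) ^ 2)
    (fun j _ => sq_nonneg _) (Finset.mem_univ i)
  simp only [Real.dist_eq, sq_abs] at h ⊢
  simpa using h

lemma piece_in_ball {A : Set (EuclideanSpace ℝ (Fin 2))} (hA : A.Nonempty)
    (hAb : Bornology.IsBounded A)
    (hmono : ∀ p ∈ A, ∀ q ∈ A, p 0 + p 1 ≤ q 0 + q 1 → p 0 ≤ q 0 ∧ p 1 ≤ q 1)
    {d : ℝ} (hd0 : 0 ≤ d) (hd : ∀ p ∈ A, ∀ q ∈ A, (p 0 + p 1) - (q 0 + q 1) ≤ d) :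
    ∃ c, A ⊆ Metric.closedBall c (d / 2) := by
  obtain ⟨w, hw⟩ := hA
  obtain ⟨C, hC⟩ := Metric.isBounded_iff.1 hAb
  have hbA : ∀ i : Fin 2, BddAbove ((fun p => p i) '' A) := by
    intro i
    refine ⟨w i + C, ?_⟩
    rintro _ ⟨p, hp, rfl⟩
    have h1 := coord_abs_le_dist p w i
    have h2 := hC hp hw
    have := abs_le.1 (h1.trans h2)
    linarith [this.2]
  have hbB : ∀ i : Fin 2, BddBelow ((fun p => p i) '' A) := by
    intro i
    refine ⟨w i - C, ?_⟩
    rintro _ ⟨p, hp, rfl⟩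
    have h1 := coord_abs_le_dist p w i
    have h2 := hC hp hw
    have := abs_le.1 (h1.trans h2)
    linarith [this.1]
  set X := (fun p : EuclideanSpace ℝ (Fin 2) => p 0) '' A with hX
  set Y := (fun p : EuclideanSpace ℝ (Fin 2) => p 1) '' A with hY
  have hXne : X.Nonempty := ⟨w 0, ⟨w, hw, rfl⟩⟩
  have hYne : Y.Nonempty := ⟨w 1, ⟨w, hw, rfl⟩⟩
  set a1 := sInf X; set a2 := sSup X; set b1 := sInf Y; set b2 := sSup Y
  have key : (a2 - a1) + (b2 - b1) ≤ d := by
    refine le_of_forall_pos_le_add fun ε hε => ?_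
    have hε4 : (0:ℝ) < ε / 4 := by linarith
    obtain ⟨_, ⟨p1, hp1, rfl⟩, h1⟩ := exists_lt_of_lt_csSup hXne
      (show a2 - ε / 4 < a2 by linarith)
    obtain ⟨_, ⟨p2, hp2, rfl⟩, h2⟩ := exists_lt_of_lt_csSup hYne
      (show b2 - ε / 4 < b2 by linarith)
    obtain ⟨_, ⟨q1, hq1, rfl⟩, h3⟩ := exists_lt_of_csInf_lt hXne
      (show a1 < a1 + ε / 4 by linarith)
    obtain ⟨_, ⟨q2, hq2, rfl⟩, h4⟩ := exists_lt_of_csInf_lt hYne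
      (show b1 < b1 + ε / 4 by linarith)
    obtain ⟨P, hP, hP0, hP1⟩ : ∃ P ∈ A, a2 - ε / 4 < P 0 ∧ b2 - ε / 4 < P 1 := by
      rcases le_total (p1 0 + p1 1) (p2 0 + p2 1) with h | h
      · exact ⟨p2, hp2, lt_of_lt_of_le h1 (hmono _ hp1 _ hp2 h).1, h2⟩
      · exact ⟨p1, hp1, h1, lt_of_lt_of_le h2 (hmono _ hp2 _ hp1 h).2⟩
    obtain ⟨Q, hQ, hQ0, hQ1⟩ : ∃ Q ∈ A, Q 0 < a1 + ε / 4 ∧ Q 1 < b1 + ε / 4 := by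
      rcases le_total (q1 0 + q1 1) (q2 0 + q2 1) with h | h
      · exact ⟨q1, hq1, h3, lt_of_le_of_lt (hmono _ hq1 _ hq2 h).2 h4⟩
      · exact ⟨q2, hq2, lt_of_le_of_lt (hmono _ hq2 _ hq1 h).1 h3, h4⟩
    have := hd P hP Q hQ
    linarith
  refine ⟨(WithLp.equiv 2 (Fin 2 → ℝ)).symm ![(a1 + a2) / 2, (b1 + b2) / 2], fun q hq => ?_⟩
  have hx1 : a1 ≤ q 0 := csInf_le (hbB 0) ⟨q, hq, rfl⟩
  have hx2 : q 0 ≤ a2 := le_csSup (hbA 0) ⟨q, hq, rfl⟩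
  have hy1 : b1 ≤ q 1 := csInf_le (hbB 1) ⟨q, hq, rfl⟩
  have hy2 : q 1 ≤ b2 := le_csSup (hbA 1) ⟨q, hq, rfl⟩
  have hkey2 : 0 ≤ a2 - a1 := by linarith
  have hkey3 : 0 ≤ b2 - b1 := by linarith
  rw [Metric.mem_closedBall, EuclideanSpace.dist_eq, Fin.sum_univ_two]
  have hc0 : ((WithLp.equiv 2 (Fin 2 → ℝ)).symm ![(a1 + a2) / 2, (b1 + b2) / 2]) 0
      = (a1 + a2) / 2 := rfl
  have hc1 : ((WithLp.equiv 2 (Fin 2 → ℝ)).symm ![(a1 + a2) / 2, (b1 + b2) / 2]) 1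
      = (b1 + b2) / 2 := rfl
  rw [hc0, hc1, Real.dist_eq, Real.dist_eq]
  have hsq : |q 0 - (a1 + a2) / 2| ^ 2 + |q 1 - (b1 + b2) / 2| ^ 2 ≤ (d / 2) ^ 2 := by
    have e0 : |q 0 - (a1 + a2) / 2| ≤ (a2 - a1) / 2 := by
      rw [abs_le]; constructor <;> linarith
    have e1 : |q 1 - (b1 + b2) / 2| ≤ (b2 - b1) / 2 := by
      rw [abs_le]; constructor <;> linarith
    nlinarith [abs_nonneg (q 0 - (a1 + a2) / 2), abs_nonneg (q 1 - (b1 + b2) / 2)]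
  calc Real.sqrt (|q 0 - (a1 + a2) / 2| ^ 2 + |q 1 - (b1 + b2) / 2| ^ 2)
      ≤ Real.sqrt ((d / 2) ^ 2) := Real.sqrt_le_sqrt hsq
    _ = d / 2 := Real.sqrt_sq (by linarith)

lemma aux_cubic (L r : ℝ) (hr : 0 < r) (hL0 : 0 ≤ L) (h4 : 0 ≤ 2 * r - L) :
    (L + 2 * r) * (r + L / 2) ^ 2 ≤ 3 * (L + r) * r * (2 * r) := by
  nlinarith [mul_nonneg (mul_nonneg h4 hL0) hr.le,
    mul_nonneg (mul_nonneg h4 hL0) hL0,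
    mul_nonneg (mul_nonneg h4 hr.le) hr.le,
    mul_nonneg (mul_nonneg hr.le hr.le) hr.le,
    mul_nonneg (mul_nonneg hL0 hr.le) hr.le]

set_option maxHeartbeats 1000000 in
theorem stmt6 (I : Set ℝ) (hI : I.OrdConnected) (hIb : Bornology.IsBounded I)
    (f : ℝ → ℝ) (hf : MonotoneOn f I) (k : ℝ)
    (hk : ∀ a ∈ I, ∀ b ∈ I, |f a - f b| ≤ k)
    (r : ℝ) (hr : 0 < r) :
    volume (Metric.cthickening r (completedGraph I f)) ≤
      ENNReal.ofReal (3 * Real.pi * (Metric.diam I + k + r) * r) := by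
  classical
  set F := completedGraph I f with hFdef
  rcases Set.eq_empty_or_nonempty F with hFe | hFe
  · rw [hFe, Metric.cthickening_empty]
    simp
  have hIo : ∀ a ∈ I, ∀ b ∈ I, a < b → rightVal I f a ≤ leftVal I f b := by
    intro a ha b hb hab
    have hm : (a + b) / 2 ∈ I := hI.out ha hb ⟨by linarith, by linarith⟩
    have ht1 : (a + b) / 2 ∈ I ∩ Set.Ioi a := ⟨hm, by simp only [Set.mem_Ioi]; linarith⟩
    have ht2 : (a + b) / 2 ∈ I ∩ Set.Iio b := ⟨hm, by simp only [Set.mem_Iio]; linarith⟩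
    have h1 : rightVal I f a ≤ f ((a + b) / 2) := by
      rw [rightVal, if_pos ⟨_, ht1⟩]
      refine csInf_le ⟨f a, ?_⟩ ⟨_, ht1, rfl⟩
      rintro _ ⟨t, ⟨htI, hta⟩, rfl⟩
      exact hf ha htI (le_of_lt hta)
    have h2 : f ((a + b) / 2) ≤ leftVal I f b := by
      rw [leftVal, if_pos ⟨_, ht2⟩]
      refine le_csSup ⟨f b, ?_⟩ ⟨_, ht2, rfl⟩
      rintro _ ⟨t, ⟨htI, htb⟩, rfl⟩
      exact hf htI hb (le_of_lt htb)
    linarith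
  have hmono : ∀ p ∈ F, ∀ q ∈ F, p 0 + p 1 ≤ q 0 + q 1 → p 0 ≤ q 0 ∧ p 1 ≤ q 1 := by
    intro p hp q hq hs
    obtain ⟨hpI, hpl, hpr⟩ := hp
    obtain ⟨hqI, hql, hqr⟩ := hq
    rcases lt_trichotomy (p 0) (q 0) with h | h | h
    · exact ⟨h.le, hpr.trans ((hIo _ hpI _ hqI h).trans hql)⟩
    · exact ⟨h.le, by linarith⟩
    · have := hqr.trans ((hIo _ hqI _ hpI h).trans hpl)
      constructor <;> linarith
  have hup : ∀ p ∈ F, ∃ t ∈ I, p 1 ≤ f t := by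
    intro p hp
    obtain ⟨hpI, -, hpr⟩ := hp
    by_cases h : (I ∩ Set.Ioi (p 0)).Nonempty
    · obtain ⟨t, htI, hto⟩ := h
      refine ⟨t, htI, hpr.trans ?_⟩
      rw [rightVal, if_pos ⟨t, htI, hto⟩]
      refine csInf_le ⟨f (p 0), ?_⟩ ⟨t, ⟨htI, hto⟩, rfl⟩
      rintro _ ⟨u, ⟨huI, huo⟩, rfl⟩
      exact hf hpI huI (le_of_lt huo)
    · exact ⟨p 0, hpI, by rwa [rightVal, if_neg h] at hpr⟩
  have hlo : ∀ p ∈ F, ∃ t ∈ I, f t ≤ p 1 := by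
    intro p hp
    obtain ⟨hpI, hpl, -⟩ := hp
    by_cases h : (I ∩ Set.Iio (p 0)).Nonempty
    · obtain ⟨t, htI, hto⟩ := h
      refine ⟨t, htI, le_trans ?_ hpl⟩
      rw [leftVal, if_pos ⟨t, htI, hto⟩]
      refine le_csSup ⟨f (p 0), ?_⟩ ⟨t, ⟨htI, hto⟩, rfl⟩
      rintro _ ⟨u, ⟨huI, huo⟩, rfl⟩
      exact hf huI hpI (le_of_lt huo)
    · exact ⟨p 0, hpI, by rwa [leftVal, if_neg h] at hpl⟩
  obtain ⟨w, hw⟩ := hFe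
  have hk0 : 0 ≤ k := (abs_nonneg _).trans (hk _ hw.1 _ hw.1)
  have hD0 : 0 ≤ Metric.diam I := Metric.diam_nonneg
  set s : EuclideanSpace ℝ (Fin 2) → ℝ := fun p => p 0 + p 1 with hsdef
  have hydiff : ∀ p ∈ F, ∀ q ∈ F, p 1 - q 1 ≤ k := by
    intro p hp q hq
    obtain ⟨t, htI, hpt⟩ := hup p hp
    obtain ⟨u, huI, hqu⟩ := hlo q hq
    have := (le_abs_self (f t - f u)).trans (hk _ htI _ huI)
    linarith
  have hxdiff : ∀ p ∈ F, ∀ q ∈ F, p 0 - q 0 ≤ Metric.diam I := by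
    intro p hp q hq
    have := Metric.dist_le_diam_of_mem hIb hp.1 hq.1
    rw [Real.dist_eq] at this
    linarith [le_abs_self (p 0 - q 0)]
  have hsdiff : ∀ p ∈ F, ∀ q ∈ F, s p - s q ≤ Metric.diam I + k := by
    intro p hp q hq
    have : s p - s q = (p 0 - q 0) + (p 1 - q 1) := by simp only [hsdef]; ring
    rw [this]
    linarith [hxdiff p hp q hq, hydiff p hp q hq]
  have hFb : Bornology.IsBounded F := by
    rw [Metric.isBounded_iff]
    refine ⟨Metric.diam I + k, fun {p} hp {q} hq => ?_⟩
    rw [EuclideanSpace.dist_eq, Fin.sum_univ_two]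
    have h1 : |p 0 - q 0| ≤ Metric.diam I :=
      abs_le.2 ⟨by linarith [hxdiff q hq p hp], hxdiff p hp q hq⟩
    have h2 : |p 1 - q 1| ≤ k :=
      abs_le.2 ⟨by linarith [hydiff q hq p hp], hydiff p hp q hq⟩
    have hs : dist (p 0) (q 0) ^ 2 + dist (p 1) (q 1) ^ 2 ≤ (Metric.diam I + k) ^ 2 := by
      rw [Real.dist_eq, Real.dist_eq]
      nlinarith [abs_nonneg (p 0 - q 0), abs_nonneg (p 1 - q 1), sq_abs (p 0 - q 0),
        sq_abs (p 1 - q 1)]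
    calc Real.sqrt (dist (p 0) (q 0) ^ 2 + dist (p 1) (q 1) ^ 2)
        ≤ Real.sqrt ((Metric.diam I + k) ^ 2) := Real.sqrt_le_sqrt hs
      _ = Metric.diam I + k := Real.sqrt_sq (by linarith)
  set S := s '' F with hSdef
  have hSne : S.Nonempty := ⟨s w, w, hw, rfl⟩
  have hSba : BddAbove S := by
    refine ⟨s w + (Metric.diam I + k), ?_⟩
    rintro _ ⟨p, hp, rfl⟩
    linarith [hsdiff p hp w hw]
  have hSbb : BddBelow S := by
    refine ⟨s w - (Metric.diam I + k), ?_⟩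
    rintro _ ⟨p, hp, rfl⟩
    linarith [hsdiff w hw p hp]
  set m := sInf S with hmdef
  set M := sSup S with hMdef
  set L := M - m with hLdef
  have hmM : m ≤ M := csInf_le_csSup hSne hSbb hSba
  have hL0 : 0 ≤ L := by simp only [hLdef]; linarith
  have hLk : L ≤ Metric.diam I + k := by
    have hub : M ≤ m + (Metric.diam I + k) := by
      refine csSup_le hSne ?_
      rintro _ ⟨p, hp, rfl⟩
      have hlb : s p - (Metric.diam I + k) ≤ m := by
        refine le_csInf hSne ?_
        rintro _ ⟨q, hq, rfl⟩
        linarith [hsdiff p hp q hq]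
      linarith
    simp only [hLdef]; linarith
  set N := max ⌈L / (2 * r)⌉₊ 1 with hNdef
  have hN1 : 1 ≤ N := le_max_right _ _
  have h2r : (0:ℝ) < 2 * r := by linarith
  have hLN : L ≤ 2 * r * N := by
    have h1 : L / (2 * r) ≤ (⌈L / (2 * r)⌉₊ : ℝ) := Nat.le_ceil _
    have h2 : ((⌈L / (2 * r)⌉₊ : ℕ) : ℝ) ≤ (N : ℝ) := Nat.cast_le.2 (le_max_left _ _)
    rw [div_le_iff₀ h2r] at h1
    nlinarith
  have hNL : (N : ℝ) * (2 * r) ≤ L + 2 * r := by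
    have h0 : 0 ≤ L / (2 * r) := div_nonneg hL0 h2r.le
    have h1 : (⌈L / (2 * r)⌉₊ : ℝ) < L / (2 * r) + 1 := Nat.ceil_lt_add_one h0
    have h2 : (N : ℝ) ≤ L / (2 * r) + 1 := by
      rcases max_cases ⌈L / (2 * r)⌉₊ 1 with ⟨he, -⟩ | ⟨he, -⟩ <;> rw [hNdef, he]
      · linarith
      · push_cast; linarith
    have h3 : (L / (2 * r) + 1) * (2 * r) = L + 2 * r := by field_simp
    nlinarith
  set ρ := min r (L / 2) with hρdef
  have hρ0 : 0 ≤ ρ := le_min hr.le (by linarith)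
  set A : ℕ → Set (EuclideanSpace ℝ (Fin 2)) :=
    fun j => F ∩ {p | m + 2 * r * j ≤ s p ∧ s p ≤ m + 2 * r * (j + 1)} with hAdef
  have hAF : ∀ j, A j ⊆ F := fun j => Set.inter_subset_left
  have hcov : F = ⋃ j ∈ Finset.range N, A j := by
    apply Set.Subset.antisymm
    · intro p hp
      have hpm : m ≤ s p := csInf_le hSbb ⟨p, hp, rfl⟩
      have hpM : s p ≤ M := le_csSup hSba ⟨p, hp, rfl⟩
      set x := (s p - m) / (2 * r) with hxdef
      have hx0 : 0 ≤ x := div_nonneg (by linarith) h2r.le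
      have hxval : x * (2 * r) = s p - m := by
        rw [hxdef]; field_simp
      set j := min ⌊x⌋₊ (N - 1) with hjdef
      have hjN : j < N := lt_of_le_of_lt (min_le_right _ _) (Nat.sub_lt hN1 one_pos)
      refine Set.mem_biUnion (Finset.mem_range.2 hjN) ⟨hp, ?_, ?_⟩
      · rcases le_or_gt ⌊x⌋₊ (N - 1) with hc | hc
        · have hjf : j = ⌊x⌋₊ := min_eq_left hc
          have h1 : (⌊x⌋₊ : ℝ) ≤ x := Nat.floor_le hx0
          rw [hjf]
          nlinarith [mul_le_mul_of_nonneg_right h1 h2r.le]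
        · have hjf : j = N - 1 := min_eq_right hc.le
          have hNle : N ≤ ⌊x⌋₊ := by omega
          have h1 : (N : ℝ) ≤ x := le_trans (Nat.cast_le.2 hNle) (Nat.floor_le hx0)
          have h1' := mul_le_mul_of_nonneg_right h1 h2r.le
          have hNc : ((N - 1 : ℕ) : ℝ) = (N : ℝ) - 1 := by
            rw [Nat.cast_sub hN1]; norm_num
          rw [hjf, hNc]
          nlinarith [h1', hxval]
      · rcases le_or_gt ⌊x⌋₊ (N - 1) with hc | hc
        · have hjf : j = ⌊x⌋₊ := min_eq_left hc
          have h1 : x < (⌊x⌋₊ : ℝ) + 1 := Nat.lt_floor_add_one x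
          rw [hjf]
          nlinarith [mul_lt_mul_of_pos_right h1 h2r]
        · have hjf : j = N - 1 := min_eq_right hc.le
          have hNc : ((N - 1 : ℕ) : ℝ) = (N : ℝ) - 1 := by
            rw [Nat.cast_sub hN1]; norm_num
          rw [hjf, hNc]
          have : s p ≤ m + L := by simp only [hLdef]; linarith
          nlinarith [hLN]
    · exact Set.iUnion₂_subset fun j _ => hAF j
  have hball : ∀ j, (A j).Nonempty → ∃ c, A j ⊆ Metric.closedBall c ρ := by
    intro j hj
    obtain ⟨c, hc⟩ := piece_in_ball hj (hFb.subset (hAF j))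
      (fun p hp q hq h => hmono p (hAF j hp) q (hAF j hq) h)
      (show (0:ℝ) ≤ 2 * ρ by linarith)
      (by
        intro p hp q hq
        have e1 : s p - s q ≤ 2 * r := by
          linarith [hp.2.2, hq.2.1]
        have e2 : s p - s q ≤ L := by
          have h1 : s p ≤ M := le_csSup hSba ⟨p, hAF j hp, rfl⟩
          have h2 : m ≤ s q := csInf_le hSbb ⟨q, hAF j hq, rfl⟩
          simp only [hLdef]; linarith
        show (p 0 + p 1) - (q 0 + q 1) ≤ 2 * ρ
        rcases le_total r (L / 2) with h | h
        · rw [hρdef, min_eq_left h]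
          exact e1.trans_eq (by ring) |>.trans_eq rfl
        · rw [hρdef, min_eq_right h]
          calc (p 0 + p 1) - (q 0 + q 1) = s p - s q := rfl
            _ ≤ L := e2
            _ = 2 * (L / 2) := by ring)
    have h2ρ : 2 * ρ / 2 = ρ := by ring
    exact ⟨c, by rwa [h2ρ] at hc⟩
  set c : ℕ → EuclideanSpace ℝ (Fin 2) :=
    fun j => if h : (A j).Nonempty then (hball j h).choose else w with hcdef
  have hsub : Metric.cthickening r F ⊆
      ⋃ j ∈ Finset.range N, Metric.closedBall (c j) (r + ρ) := by
    have hcth : ∀ t : Finset ℕ,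
        Metric.cthickening r (⋃ j ∈ t, A j) = ⋃ j ∈ t, Metric.cthickening r (A j) := by
      intro t
      induction t using Finset.induction_on with
      | empty => simp [Metric.cthickening_empty]
      | insert _ _ hni ih =>
          rw [Finset.set_biUnion_insert, Metric.cthickening_union, ih,
            Finset.set_biUnion_insert]
    rw [hcov, hcth]
    refine Set.iUnion₂_mono fun j _ => ?_
    by_cases h : (A j).Nonempty
    · have h1 : A j ⊆ Metric.closedBall (c j) ρ := by
        simp only [hcdef, dif_pos h]
        exact (hball j h).choose_spec
      calc Metric.cthickening r (A j)
          ⊆ Metric.cthickening r (Metric.closedBall (c j) ρ) :=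
            Metric.cthickening_subset_of_subset r h1
        _ = Metric.closedBall (c j) (r + ρ) := cthickening_closedBall hr.le hρ0 _
    · rw [Set.not_nonempty_iff_eq_empty.1 h, Metric.cthickening_empty]
      exact Set.empty_subset _
  have hvol : ∀ j, volume (Metric.closedBall (c j) (r + ρ))
      = ENNReal.ofReal ((r + ρ) ^ 2 * Real.pi) := by
    intro j
    rw [EuclideanSpace.volume_closedBall]
    have hcard : Fintype.card (Fin 2) = 2 := Fintype.card_fin 2
    rw [hcard]
    have hg : Real.Gamma ((2 : ℕ) / 2 + 1) = 1 := by
      norm_num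
    have hsq : Real.sqrt Real.pi ^ 2 = Real.pi := Real.sq_sqrt Real.pi_pos.le
    rw [hg, hsq]
    rw [← ENNReal.ofReal_pow (by linarith : (0:ℝ) ≤ r + ρ)]
    rw [← ENNReal.ofReal_mul (by positivity)]
    norm_num
  calc volume (Metric.cthickening r F)
      ≤ volume (⋃ j ∈ Finset.range N, Metric.closedBall (c j) (r + ρ)) :=
        measure_mono hsub
    _ ≤ ∑ j ∈ Finset.range N, volume (Metric.closedBall (c j) (r + ρ)) :=
        measure_biUnion_finset_le _ _
    _ = (N : ℝ≥0∞) * ENNReal.ofReal ((r + ρ) ^ 2 * Real.pi) := by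
        simp only [hvol]
        rw [Finset.sum_const, Finset.card_range, nsmul_eq_mul]
    _ ≤ ENNReal.ofReal (3 * Real.pi * (Metric.diam I + k + r) * r) := by
        rw [← ENNReal.ofReal_natCast N, ← ENNReal.ofReal_mul (Nat.cast_nonneg N)]
        refine ENNReal.ofReal_le_ofReal ?_
        have h1 : (N : ℝ) * (r + ρ) ^ 2 ≤ 3 * (L + r) * r := by
          rcases le_total r (L / 2) with h | h
          · have hρr : ρ = r := min_eq_left h
            have h2 := mul_le_mul_of_nonneg_right hNL h2r.le
            rw [hρr]
            nlinarith
          · have hρr : ρ = L / 2 := min_eq_right h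
            have h2 := mul_le_mul_of_nonneg_right hNL (sq_nonneg (r + L / 2))
            have h4 : 0 ≤ 2 * r - L := by linarith
            have h3 : (L + 2 * r) * (r + L / 2) ^ 2 ≤ 3 * (L + r) * r * (2 * r) :=
              aux_cubic L r hr hL0 h4
            rw [hρr]
            nlinarith
        have e1 := mul_le_mul_of_nonneg_right h1 Real.pi_pos.le
        have e2 : 0 ≤ (Metric.diam I + k - L) * r * Real.pi :=
          mul_nonneg (mul_nonneg (by linarith) hr.le) Real.pi_pos.le
        nlinarith [e1, e2]
end
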